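/- Let M and M̃ be the label-extended adjacency matrices of two Unique Games instances on the same d-regular weighted graph G on n vertices with weights w_{uv} ≤ 1, whose permutations differ only on a set of edges of total weight at most ε·nd/2. Let 0 < θ < γ ≤ 1, let S be the span of the eigenvectors of the adjacency matrix A of G with eigenvalue greater than (1−γ)d, and assume every unit vector φ ∈ S satisfies ‖φ‖_∞ ≤ C/√n. Let Y be the span of the eigenvectors of M̃ with eigenvalue at least (1−γ)d, with P_Y the orthogonal projection onto Y, and assume Y ≠ ℝ^{nk}. Then every unit eigenvector w of M with eigenvalue at least (1−θ)d satisfies ‖w − P_Y w‖ ≤ (2C√ε + 2√(θ/γ)) / (γ − θ); in other words, w = α y + β y_⊥ with y ∈ Y, y_⊥ ⊥ Y both unit vectors and |β| ≤ (2C√ε + 2√(θ/γ))/(γ − θ). -/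

import Mathlib

open Matrix Finset RealInnerProductSpace

section UGHelpers

variable {E : Type*} [NormedAddCommGroup E] [InnerProductSpace ℝ E] [FiniteDimensional ℝ E]

/-- Quadratic form of a symmetric map on the orthogonal complement of the span of
eigenvectors with eigenvalues satisfying `P` is at most `c`, provided all eigenvalues
not satisfying `P` are at most `c`. -/
lemma ug_quad_form_le_on_orthogonal (T : E →ₗ[ℝ] E) (hT : T.IsSymmetric)
    (P : ℝ → Prop) (c : ℝ) (hP : ∀ μ : ℝ, ¬ P μ → μ ≤ c)
    (U : Submodule ℝ E)
    (hU : U = Submodule.span ℝ {v : E | v ≠ 0 ∧ ∃ μ : ℝ, P μ ∧ T v = μ • v}) :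
    ∀ z ∈ Uᗮ, ⟪z, T z⟫ ≤ c * ‖z‖ ^ 2 := by
  subst hU
  set U := Submodule.span ℝ {v : E | v ≠ 0 ∧ ∃ μ : ℝ, P μ ∧ T v = μ • v} with hU
  have hTU : ∀ u ∈ U, T u ∈ U := by
    intro u hu
    have hle : U ≤ Submodule.comap T U := by
      rw [hU, Submodule.span_le]
      rintro v ⟨hv0, μ, hμ, hv⟩
      simp only [Submodule.mem_comap, SetLike.mem_coe, hv]
      exact Submodule.smul_mem _ _ (Submodule.subset_span ⟨hv0, μ, hμ, hv⟩)
    exact hle hu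
  have hTUo : ∀ z ∈ Uᗮ, T z ∈ Uᗮ := by
    intro z hz
    rw [Submodule.mem_orthogonal]
    intro u hu
    rw [← hT u z]
    exact hz _ (hTU u hu)
  set T' : Uᗮ →ₗ[ℝ] Uᗮ := T.restrict hTUo with hT'def
  have hcoe : ∀ a : Uᗮ, ((T' a : Uᗮ) : E) = T (a : E) := fun a => rfl
  have hT'sym : T'.IsSymmetric := by
    intro a b
    simp only [Submodule.coe_inner, hcoe]
    exact hT _ _
  obtain ⟨m, hm⟩ : ∃ m, Module.finrank ℝ (Uᗮ : Submodule ℝ E) = m := ⟨_, rfl⟩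
  have heig : ∀ i : Fin m, hT'sym.eigenvalues hm i ≤ c := by
    intro i
    have hev := hT'sym.hasEigenvector_eigenvectorBasis hm i
    set v : Uᗮ := hT'sym.eigenvectorBasis hm i with hv
    have hv0 : (v : E) ≠ 0 := fun h => hev.2 (by exact_mod_cast Subtype.ext h)
    have hTv : T (v : E) = hT'sym.eigenvalues hm i • (v : E) := by
      rw [← hcoe, hev.apply_eq_smul]; rfl
    refine hP _ (fun hPμ => ?_)
    have hvU : (v : E) ∈ U := Submodule.subset_span ⟨hv0, _, hPμ, hTv⟩
    have : ⟪(v : E), (v : E)⟫ = 0 := (Submodule.mem_orthogonal _ _).1 v.2 _ hvU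
    exact hv0 (inner_self_eq_zero.1 this)
  intro z hz
  lift z to Uᗮ using hz with z'
  have key : ⟪(z' : E), T (z' : E)⟫ = ∑ i : Fin m,
      hT'sym.eigenvalues hm i * (⟪hT'sym.eigenvectorBasis hm i, z'⟫ : ℝ) ^ 2 := by
    have hsum := (hT'sym.eigenvectorBasis hm).sum_inner_mul_inner z' (T' z')
    rw [← hcoe, ← Submodule.coe_inner, ← hsum]
    refine Finset.sum_congr rfl (fun i _ => ?_)
    have hbi : T' (hT'sym.eigenvectorBasis hm i)
        = hT'sym.eigenvalues hm i • hT'sym.eigenvectorBasis hm i :=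
      (hT'sym.hasEigenvector_eigenvectorBasis hm i).apply_eq_smul
    rw [← hT'sym (hT'sym.eigenvectorBasis hm i) z', hbi, inner_smul_left]
    rw [real_inner_comm z' (hT'sym.eigenvectorBasis hm i)]
    ring_nf
    simp [starRingEnd_apply]
  have hpars : ∑ i : Fin m, (⟪hT'sym.eigenvectorBasis hm i, z'⟫ : ℝ) ^ 2 = ‖(z' : E)‖ ^ 2 := by
    have hsum := (hT'sym.eigenvectorBasis hm).sum_inner_mul_inner z' z'
    have : ⟪z', z'⟫ = ‖(z' : E)‖ ^ 2 := by
      rw [Submodule.coe_inner, real_inner_self_eq_norm_sq]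
    rw [← this, ← hsum]
    refine Finset.sum_congr rfl (fun i _ => ?_)
    rw [real_inner_comm z' (hT'sym.eigenvectorBasis hm i), pow_two]
  calc ⟪(z' : E), T (z' : E)⟫
      = ∑ i : Fin m, hT'sym.eigenvalues hm i * (⟪hT'sym.eigenvectorBasis hm i, z'⟫ : ℝ) ^ 2 := key
    _ ≤ ∑ i : Fin m, c * (⟪hT'sym.eigenvectorBasis hm i, z'⟫ : ℝ) ^ 2 := by
        refine Finset.sum_le_sum (fun i _ => ?_)
        exact mul_le_mul_of_nonneg_right (heig i) (sq_nonneg _)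
    _ = c * ‖(z' : E)‖ ^ 2 := by rw [← Finset.mul_sum, hpars]

lemma ug_sum_sqrt_CS {ι : Type*} [Fintype ι] (f g : ι → ℝ) :
    ∑ i, f i * g i ≤ Real.sqrt (∑ i, f i ^ 2) * Real.sqrt (∑ i, g i ^ 2) := by
  have h := Finset.sum_mul_sq_le_sq_mul_sq Finset.univ f g
  calc ∑ i, f i * g i ≤ |∑ i, f i * g i| := le_abs_self _
    _ = Real.sqrt ((∑ i, f i * g i) ^ 2) := (Real.sqrt_sq_eq_abs _).symm
    _ ≤ Real.sqrt ((∑ i, f i ^ 2) * ∑ i, g i ^ 2) := Real.sqrt_le_sqrt h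
    _ = _ := Real.sqrt_mul (by positivity) _

lemma ug_quadsum_le {ι : Type*} [Fintype ι] (W : ι → ι → ℝ) (d : ℝ)
    (hW : ∀ u v, 0 ≤ W u v) (hrow : ∀ u, ∑ v, W u v ≤ d) (hcol : ∀ v, ∑ u, W u v ≤ d)
    (f : ι → ℝ) :
    ∑ u, ∑ v, W u v * (|f u| * |f v|) ≤ d * ∑ u, f u ^ 2 := by
  have step1 : ∑ u, ∑ v, W u v * (|f u| * |f v|)
      ≤ ∑ u, ∑ v, W u v * ((f u ^ 2 + f v ^ 2) / 2) := by
    refine Finset.sum_le_sum fun u _ => Finset.sum_le_sum fun v _ => ?_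
    refine mul_le_mul_of_nonneg_left ?_ (hW u v)
    nlinarith [sq_nonneg (|f u| - |f v|), sq_abs (f u), sq_abs (f v), abs_nonneg (f u),
      abs_nonneg (f v)]
  have e1 : ∑ u, ∑ v, W u v * ((f u ^ 2 + f v ^ 2) / 2)
      = (∑ u, (∑ v, W u v) * f u ^ 2) / 2 + (∑ v, (∑ u, W u v) * f v ^ 2) / 2 := by
    have eA : ∑ u, ∑ v, W u v * ((f u ^ 2 + f v ^ 2) / 2)
        = ∑ u, ∑ v, ((W u v * f u ^ 2) / 2 + (W u v * f v ^ 2) / 2) :=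
      Finset.sum_congr rfl fun u _ => Finset.sum_congr rfl fun v _ => by ring
    rw [eA]
    have eB : ∀ u : ι, ∑ v, ((W u v * f u ^ 2) / 2 + (W u v * f v ^ 2) / 2)
        = ∑ v, (W u v * f u ^ 2) / 2 + ∑ v, (W u v * f v ^ 2) / 2 := fun u =>
      Finset.sum_add_distrib
    simp_rw [eB]
    rw [Finset.sum_add_distrib]
    congr 1
    · rw [Finset.sum_div]
      refine Finset.sum_congr rfl fun u _ => ?_
      rw [← Finset.sum_div, ← Finset.sum_mul]
    · rw [Finset.sum_comm, Finset.sum_div]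
      refine Finset.sum_congr rfl fun v _ => ?_
      rw [← Finset.sum_div, ← Finset.sum_mul]
  have b1 : ∑ u, (∑ v, W u v) * f u ^ 2 ≤ d * ∑ u, f u ^ 2 := by
    rw [Finset.mul_sum]
    exact Finset.sum_le_sum fun u _ => mul_le_mul_of_nonneg_right (hrow u) (sq_nonneg _)
  have b2 : ∑ v, (∑ u, W u v) * f v ^ 2 ≤ d * ∑ v, f v ^ 2 := by
    rw [Finset.mul_sum]
    exact Finset.sum_le_sum fun v _ => mul_le_mul_of_nonneg_right (hcol v) (sq_nonneg _)
  calc ∑ u, ∑ v, W u v * (|f u| * |f v|) ≤ _ := step1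
    _ = _ := e1
    _ ≤ d * ∑ u, f u ^ 2 := by linarith

lemma ug_eucl_norm_sq {ι : Type*} [Fintype ι] (v : EuclideanSpace ℝ ι) :
    ‖v‖ ^ 2 = ∑ i, v i ^ 2 := by
  rw [EuclideanSpace.norm_eq, Real.sq_sqrt (by positivity)]
  exact Finset.sum_congr rfl fun i _ => by rw [Real.norm_eq_abs, sq_abs]

lemma ug_inner_toEuclideanLin {ι : Type*} [Fintype ι] [DecidableEq ι]
    (B : Matrix ι ι ℝ) (x y : EuclideanSpace ℝ ι) :
    ⟪x, (Matrix.toEuclideanLin B) y⟫ = ∑ u, ∑ v, B u v * (x u * y v) := by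
  have happ : ∀ u, (Matrix.toEuclideanLin B y) u = ∑ v, B u v * y v := fun u => rfl
  rw [PiLp.inner_apply]
  refine Finset.sum_congr rfl fun u _ => ?_
  rw [happ]
  simp only [RCLike.inner_apply, starRingEnd_apply, star_trivial, Finset.mul_sum, Finset.sum_mul]
  exact Finset.sum_congr rfl fun v _ => by ring

lemma ug_block_rowsum {n k : ℕ} (w : Fin n → Fin n → ℝ)
    (σ : Fin n → Fin n → Equiv.Perm (Fin k))
    (B : Matrix (Fin n × Fin k) (Fin n × Fin k) ℝ)
    (hB : ∀ p q, B p q = w p.1 q.1 * (if σ p.1 q.1 p.2 = q.2 then 1 else 0))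
    (p : Fin n × Fin k) : ∑ q, B p q = ∑ v, w p.1 v := by
  rw [Fintype.sum_prod_type]
  refine Finset.sum_congr rfl fun v _ => ?_
  simp_rw [hB]
  rw [Finset.sum_eq_single (σ p.1 v p.2)]
  · simp
  · intro j _ hj; simp [Ne.symm, hj]
  · simp

lemma ug_block_expand {n k : ℕ} (w : Fin n → Fin n → ℝ)
    (σ : Fin n → Fin n → Equiv.Perm (Fin k))
    (B : Matrix (Fin n × Fin k) (Fin n × Fin k) ℝ)
    (hB : ∀ p q, B p q = w p.1 q.1 * (if σ p.1 q.1 p.2 = q.2 then 1 else 0))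
    (x : EuclideanSpace ℝ (Fin n × Fin k)) :
    ⟪x, (Matrix.toEuclideanLin B) x⟫
      = ∑ u, ∑ v, w u v * ∑ i, x (u, i) * x (v, σ u v i) := by
  have h0 : ⟪x, (Matrix.toEuclideanLin B) x⟫ = ∑ p, ∑ q, B p q * (x p * x q) :=
    ug_inner_toEuclideanLin B x x
  rw [h0, Fintype.sum_prod_type]
  refine Finset.sum_congr rfl fun u _ => ?_
  have hin : ∀ i : Fin k, ∑ q : Fin n × Fin k, B (u, i) q * (x (u, i) * x q)
      = ∑ v, w u v * (x (u, i) * x (v, σ u v i)) := by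
    intro i
    rw [Fintype.sum_prod_type]
    refine Finset.sum_congr rfl fun v _ => ?_
    simp_rw [hB]
    rw [Finset.sum_eq_single (σ u v i)]
    · simp
    · intro j _ hj; simp [Ne.symm, hj]
    · simp
  simp_rw [hin]
  rw [Finset.sum_comm]
  refine Finset.sum_congr rfl fun v _ => ?_
  rw [Finset.mul_sum]

lemma ug_eig_iff {ι : Type*} [Fintype ι] [DecidableEq ι]
    (B : Matrix ι ι ℝ) (v : EuclideanSpace ℝ ι) (μ : ℝ) :
    (Matrix.toEuclideanLin B v = μ • v) ↔ (B *ᵥ v.ofLp = μ • v.ofLp) := by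
  show (WithLp.toLp 2 (B *ᵥ WithLp.ofLp v) = μ • v) ↔ _
  constructor
  · intro h
    exact congrArg WithLp.ofLp h
  · intro h
    exact congrArg (WithLp.toLp 2) h

lemma ug_isSymmetric_of_entries {ι : Type*} [Fintype ι] [DecidableEq ι]
    (B : Matrix ι ι ℝ) (h : ∀ p q, B q p = B p q) :
    (Matrix.toEuclideanLin B).IsSymmetric := by
  rw [← Matrix.isHermitian_iff_isSymmetric]
  ext p q
  rw [Matrix.conjTranspose_apply, star_trivial]
  exact h p q


lemma ug_C_ge_one {n : ℕ} (hn : 0 < n) (w : Fin n → Fin n → ℝ) (d C γ : ℝ) (hd : 0 < d) (hγ0 : 0 < γ)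
    (hreg : ∀ u, ∑ v, w u v = d)
    (A : Matrix (Fin n) (Fin n) ℝ) (hA : ∀ u v, A u v = w u v)
    (S : Submodule ℝ (EuclideanSpace ℝ (Fin n)))
    (hS : S = Submodule.span ℝ {φ : EuclideanSpace ℝ (Fin n) |
        φ ≠ 0 ∧ ∃ μ : ℝ, (1 - γ) * d < μ ∧ A.mulVec φ = μ • φ})
    (hC : ∀ φ : EuclideanSpace ℝ (Fin n), φ ∈ S → ‖φ‖ = 1 →
        ∀ u, |φ u| ≤ C / Real.sqrt n) : 1 ≤ C := by
  have hn' : (0:ℝ) < n := by exact_mod_cast hn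
  have hsqn : 0 < Real.sqrt n := Real.sqrt_pos.2 hn'
  set φ0 : EuclideanSpace ℝ (Fin n) := WithLp.toLp 2 (fun _ => (Real.sqrt n)⁻¹) with hφ0def
  have hφ0app : ∀ u, φ0 u = (Real.sqrt n)⁻¹ := fun _ => rfl
  have hne : φ0 ≠ 0 := by
    intro h
    have h0 : ((Real.sqrt n)⁻¹ : ℝ) = 0 := by
      calc ((Real.sqrt n)⁻¹ : ℝ) = φ0 (⟨0, hn⟩ : Fin n) := rfl
        _ = (0 : EuclideanSpace ℝ (Fin n)) (⟨0, hn⟩ : Fin n) := by rw [h]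
        _ = 0 := rfl
    exact (inv_ne_zero hsqn.ne') h0
  have heigv : A.mulVec φ0 = d • φ0 := by
    funext u
    show ∑ v, A u v * (Real.sqrt n)⁻¹ = d * (Real.sqrt n)⁻¹
    simp_rw [hA]
    rw [← Finset.sum_mul, hreg]
  have hmem : φ0 ∈ S := by
    rw [hS]
    exact Submodule.subset_span ⟨hne, d, by nlinarith, heigv⟩
  have hφ0norm : ‖φ0‖ = 1 := by
    have h2 : ‖φ0‖ ^ 2 = 1 := by
      rw [ug_eucl_norm_sq]
      show ∑ _u : Fin n, ((Real.sqrt n)⁻¹ : ℝ) ^ 2 = 1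
      rw [Finset.sum_const, Finset.card_univ, Fintype.card_fin, nsmul_eq_mul,
        inv_pow, Real.sq_sqrt hn'.le, mul_inv_cancel₀ hn'.ne']
    nlinarith [norm_nonneg φ0]
  have hb := hC φ0 hmem hφ0norm (⟨0, hn⟩ : Fin n)
  rw [hφ0app (⟨0, hn⟩ : Fin n), abs_of_nonneg (inv_nonneg.2 hsqn.le), div_eq_mul_inv] at hb
  have hb2 := mul_le_mul_of_nonneg_right hb hsqn.le
  rwa [inv_mul_cancel₀ hsqn.ne', mul_assoc, inv_mul_cancel₀ hsqn.ne', mul_one] at hb2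

lemma ug_T_bound {n : ℕ} (hn : 0 < n) (c : Fin n → Fin n → ℝ) (d ε C τ : ℝ)
    (hd : 0 < d) (hε : 0 ≤ ε) (hτ : 0 ≤ τ) (hC0 : 0 ≤ C)
    (hc_nonneg : ∀ u v, 0 ≤ c u v)
    (hcrow : ∀ u, ∑ v, c u v ≤ d) (hccol : ∀ v, ∑ u, c u v ≤ d)
    (hcsum : ∑ u, ∑ v, c u v ≤ ε * n * d)
    (s p φ : Fin n → ℝ)
    (hsinf : ∀ u, |s u| ≤ C / Real.sqrt n) (hp2 : ∑ u, p u ^ 2 ≤ τ)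
    (hφ : ∀ u, φ u = s u + p u) (hφ0 : ∀ u, 0 ≤ φ u) :
    ∑ u, ∑ v, c u v * (φ u * φ v) ≤ d * (C * Real.sqrt ε + Real.sqrt τ) ^ 2 := by
  have hn' : (0:ℝ) < n := by exact_mod_cast hn
  have hsqn : 0 < Real.sqrt n := Real.sqrt_pos.2 hn'
  have hK0 : 0 ≤ C / Real.sqrt n := by positivity
  have habs : ∀ u, φ u ≤ |s u| + |p u| := fun u => by
    rw [hφ]
    exact le_trans (le_abs_self _) (abs_add_le _ _)
  have hsu2 : ∀ u, s u ^ 2 ≤ (C / Real.sqrt n) ^ 2 := fun u => by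
    rw [← sq_abs]
    exact pow_le_pow_left₀ (abs_nonneg _) (hsinf u) 2
  -- the constant (C/√n)^2 * (ε n d) = C^2 ε d
  have hKsum : C / Real.sqrt n * (C / Real.sqrt n) * (ε * n * d) = C ^ 2 * ε * d := by
    rw [div_mul_div_comm, Real.mul_self_sqrt hn'.le, div_mul_eq_mul_div,
      div_eq_iff hn'.ne']
    ring
  -- step 1: split into four sums
  have hsplit : ∑ u, ∑ v, c u v * (φ u * φ v)
      ≤ (∑ u, ∑ v, c u v * (|s u| * |s v|)) + ((∑ u, ∑ v, c u v * (|s u| * |p v|))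
        + ((∑ u, ∑ v, c u v * (|p u| * |s v|)) + ∑ u, ∑ v, c u v * (|p u| * |p v|))) := by
    have h1 : ∀ u v : Fin n, c u v * (φ u * φ v)
        ≤ c u v * (|s u| * |s v|) + (c u v * (|s u| * |p v|)
          + (c u v * (|p u| * |s v|) + c u v * (|p u| * |p v|))) := by
      intro u v
      have h2 : φ u * φ v ≤ (|s u| + |p u|) * (|s v| + |p v|) :=
        mul_le_mul (habs u) (habs v) (hφ0 v) (by positivity)
      have h3 := mul_le_mul_of_nonneg_left h2 (hc_nonneg u v)
      nlinarith [h3]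
    calc ∑ u, ∑ v, c u v * (φ u * φ v)
        ≤ ∑ u, ∑ v, (c u v * (|s u| * |s v|) + (c u v * (|s u| * |p v|)
          + (c u v * (|p u| * |s v|) + c u v * (|p u| * |p v|)))) :=
          Finset.sum_le_sum fun u _ => Finset.sum_le_sum fun v _ => h1 u v
      _ = _ := by
          simp_rw [Finset.sum_add_distrib]
  -- T1
  have hT1 : ∑ u, ∑ v, c u v * (|s u| * |s v|) ≤ C ^ 2 * ε * d := by
    have h1 : ∑ u, ∑ v, c u v * (|s u| * |s v|)
        ≤ ∑ u, ∑ v, c u v * (C / Real.sqrt n * (C / Real.sqrt n)) := by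
      refine Finset.sum_le_sum fun u _ => Finset.sum_le_sum fun v _ => ?_
      exact mul_le_mul_of_nonneg_left
        (mul_le_mul (hsinf u) (hsinf v) (abs_nonneg _) hK0) (hc_nonneg u v)
    have h2 : ∑ u, ∑ v, c u v * (C / Real.sqrt n * (C / Real.sqrt n))
        = C / Real.sqrt n * (C / Real.sqrt n) * ∑ u, ∑ v, c u v := by
      rw [Finset.mul_sum]
      refine Finset.sum_congr rfl fun u _ => ?_
      rw [Finset.mul_sum]
      exact Finset.sum_congr rfl fun v _ => by ring
    have h3 : C / Real.sqrt n * (C / Real.sqrt n) * (∑ u, ∑ v, c u v)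
        ≤ C / Real.sqrt n * (C / Real.sqrt n) * (ε * n * d) :=
      mul_le_mul_of_nonneg_left hcsum (by positivity)
    rw [h2] at h1
    rw [hKsum] at h3
    linarith
  -- T2a
  have hsqA : ∑ q : Fin n × Fin n, (Real.sqrt (c q.1 q.2) * |s q.1|) ^ 2 ≤ C ^ 2 * ε * d := by
    rw [Fintype.sum_prod_type]
    have h1 : ∀ u v : Fin n, (Real.sqrt (c u v) * |s u|) ^ 2
        ≤ c u v * (C / Real.sqrt n * (C / Real.sqrt n)) := by
      intro u v
      rw [mul_pow, Real.sq_sqrt (hc_nonneg u v), sq_abs]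
      refine mul_le_mul_of_nonneg_left ?_ (hc_nonneg u v)
      have := hsu2 u
      nlinarith [hsu2 u]
    calc ∑ u, ∑ v, (Real.sqrt (c u v) * |s u|) ^ 2
        ≤ ∑ u, ∑ v, c u v * (C / Real.sqrt n * (C / Real.sqrt n)) :=
          Finset.sum_le_sum fun u _ => Finset.sum_le_sum fun v _ => h1 u v
      _ = C / Real.sqrt n * (C / Real.sqrt n) * ∑ u, ∑ v, c u v := by
          rw [Finset.mul_sum]
          refine Finset.sum_congr rfl fun u _ => ?_
          rw [Finset.mul_sum]
          exact Finset.sum_congr rfl fun v _ => by ring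
      _ ≤ C / Real.sqrt n * (C / Real.sqrt n) * (ε * n * d) :=
          mul_le_mul_of_nonneg_left hcsum (by positivity)
      _ = C ^ 2 * ε * d := hKsum
  have hsqBcol : ∑ q : Fin n × Fin n, (Real.sqrt (c q.1 q.2) * |p q.2|) ^ 2 ≤ d * τ := by
    rw [Fintype.sum_prod_type]
    have h1 : ∀ u v : Fin n, (Real.sqrt (c u v) * |p v|) ^ 2 = c u v * p v ^ 2 := by
      intro u v
      rw [mul_pow, Real.sq_sqrt (hc_nonneg u v), sq_abs]
    simp_rw [h1]
    rw [Finset.sum_comm]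
    have h2 : ∀ v : Fin n, ∑ u, c u v * p v ^ 2 ≤ d * p v ^ 2 := by
      intro v
      rw [← Finset.sum_mul]
      exact mul_le_mul_of_nonneg_right (hccol v) (sq_nonneg _)
    calc ∑ v, ∑ u, c u v * p v ^ 2 ≤ ∑ v, d * p v ^ 2 :=
          Finset.sum_le_sum fun v _ => h2 v
      _ = d * ∑ v, p v ^ 2 := by rw [Finset.mul_sum]
      _ ≤ d * τ := mul_le_mul_of_nonneg_left hp2 hd.le
  have hsqBrow : ∑ q : Fin n × Fin n, (Real.sqrt (c q.1 q.2) * |p q.1|) ^ 2 ≤ d * τ := by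
    rw [Fintype.sum_prod_type]
    have h1 : ∀ u v : Fin n, (Real.sqrt (c u v) * |p u|) ^ 2 = c u v * p u ^ 2 := by
      intro u v
      rw [mul_pow, Real.sq_sqrt (hc_nonneg u v), sq_abs]
    simp_rw [h1]
    have h2 : ∀ u : Fin n, ∑ v, c u v * p u ^ 2 ≤ d * p u ^ 2 := by
      intro u
      rw [← Finset.sum_mul]
      exact mul_le_mul_of_nonneg_right (hcrow u) (sq_nonneg _)
    calc ∑ u, ∑ v, c u v * p u ^ 2 ≤ ∑ u, d * p u ^ 2 :=
          Finset.sum_le_sum fun u _ => h2 u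
      _ = d * ∑ u, p u ^ 2 := by rw [Finset.mul_sum]
      _ ≤ d * τ := mul_le_mul_of_nonneg_left hp2 hd.le
  have hsqrtprod : Real.sqrt (C ^ 2 * ε * d) * Real.sqrt (d * τ)
      = C * Real.sqrt ε * d * Real.sqrt τ := by
    rw [← Real.sqrt_mul (by positivity)]
    have he : C ^ 2 * ε * d * (d * τ) = (C * Real.sqrt ε * d * Real.sqrt τ) ^ 2 := by
      rw [mul_pow, mul_pow, mul_pow, Real.sq_sqrt hε, Real.sq_sqrt hτ]
      ring
    rw [he, Real.sqrt_sq (mul_nonneg (mul_nonneg (mul_nonneg hC0 (Real.sqrt_nonneg _)) hd.le)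
      (Real.sqrt_nonneg _))]
  have hT2a : ∑ u, ∑ v, c u v * (|s u| * |p v|) ≤ C * Real.sqrt ε * d * Real.sqrt τ := by
    have h1 : ∑ u, ∑ v, c u v * (|s u| * |p v|)
        = ∑ q : Fin n × Fin n, (Real.sqrt (c q.1 q.2) * |s q.1|)
            * (Real.sqrt (c q.1 q.2) * |p q.2|) := by
      rw [Fintype.sum_prod_type]
      refine Finset.sum_congr rfl fun u _ => Finset.sum_congr rfl fun v _ => ?_
      have hcs := Real.mul_self_sqrt (hc_nonneg u v)
      calc c u v * (|s u| * |p v|)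
          = (Real.sqrt (c u v) * Real.sqrt (c u v)) * (|s u| * |p v|) := by rw [hcs]
        _ = (Real.sqrt (c u v) * |s u|) * (Real.sqrt (c u v) * |p v|) := by ring
    rw [h1]
    calc ∑ q : Fin n × Fin n, (Real.sqrt (c q.1 q.2) * |s q.1|)
            * (Real.sqrt (c q.1 q.2) * |p q.2|)
        ≤ Real.sqrt (∑ q : Fin n × Fin n, (Real.sqrt (c q.1 q.2) * |s q.1|) ^ 2)
          * Real.sqrt (∑ q : Fin n × Fin n, (Real.sqrt (c q.1 q.2) * |p q.2|) ^ 2) :=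
          ug_sum_sqrt_CS _ _
      _ ≤ Real.sqrt (C ^ 2 * ε * d) * Real.sqrt (d * τ) :=
          mul_le_mul (Real.sqrt_le_sqrt hsqA) (Real.sqrt_le_sqrt hsqBcol)
            (Real.sqrt_nonneg _) (Real.sqrt_nonneg _)
      _ = C * Real.sqrt ε * d * Real.sqrt τ := hsqrtprod
  have hT2b : ∑ u, ∑ v, c u v * (|p u| * |s v|) ≤ C * Real.sqrt ε * d * Real.sqrt τ := by
    have h1 : ∑ u, ∑ v, c u v * (|p u| * |s v|)
        = ∑ q : Fin n × Fin n, (Real.sqrt (c q.1 q.2) * |s q.2|)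
            * (Real.sqrt (c q.1 q.2) * |p q.1|) := by
      rw [Fintype.sum_prod_type]
      refine Finset.sum_congr rfl fun u _ => Finset.sum_congr rfl fun v _ => ?_
      have hcs := Real.mul_self_sqrt (hc_nonneg u v)
      calc c u v * (|p u| * |s v|)
          = (Real.sqrt (c u v) * Real.sqrt (c u v)) * (|p u| * |s v|) := by rw [hcs]
        _ = (Real.sqrt (c u v) * |s v|) * (Real.sqrt (c u v) * |p u|) := by ring
    have hsqA' : ∑ q : Fin n × Fin n, (Real.sqrt (c q.1 q.2) * |s q.2|) ^ 2
        ≤ C ^ 2 * ε * d := by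
      rw [Fintype.sum_prod_type]
      have h2 : ∀ u v : Fin n, (Real.sqrt (c u v) * |s v|) ^ 2
          ≤ c u v * (C / Real.sqrt n * (C / Real.sqrt n)) := by
        intro u v
        rw [mul_pow, Real.sq_sqrt (hc_nonneg u v), sq_abs]
        refine mul_le_mul_of_nonneg_left ?_ (hc_nonneg u v)
        nlinarith [hsu2 v]
      calc ∑ u, ∑ v, (Real.sqrt (c u v) * |s v|) ^ 2
          ≤ ∑ u, ∑ v, c u v * (C / Real.sqrt n * (C / Real.sqrt n)) :=
            Finset.sum_le_sum fun u _ => Finset.sum_le_sum fun v _ => h2 u v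
        _ = C / Real.sqrt n * (C / Real.sqrt n) * ∑ u, ∑ v, c u v := by
            rw [Finset.mul_sum]
            refine Finset.sum_congr rfl fun u _ => ?_
            rw [Finset.mul_sum]
            exact Finset.sum_congr rfl fun v _ => by ring
        _ ≤ C / Real.sqrt n * (C / Real.sqrt n) * (ε * n * d) :=
            mul_le_mul_of_nonneg_left hcsum (by positivity)
        _ = C ^ 2 * ε * d := hKsum
    rw [h1]
    calc ∑ q : Fin n × Fin n, (Real.sqrt (c q.1 q.2) * |s q.2|)
            * (Real.sqrt (c q.1 q.2) * |p q.1|)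
        ≤ Real.sqrt (∑ q : Fin n × Fin n, (Real.sqrt (c q.1 q.2) * |s q.2|) ^ 2)
          * Real.sqrt (∑ q : Fin n × Fin n, (Real.sqrt (c q.1 q.2) * |p q.1|) ^ 2) :=
          ug_sum_sqrt_CS _ _
      _ ≤ Real.sqrt (C ^ 2 * ε * d) * Real.sqrt (d * τ) :=
          mul_le_mul (Real.sqrt_le_sqrt hsqA') (Real.sqrt_le_sqrt hsqBrow)
            (Real.sqrt_nonneg _) (Real.sqrt_nonneg _)
      _ = C * Real.sqrt ε * d * Real.sqrt τ := hsqrtprod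
  have hT3 : ∑ u, ∑ v, c u v * (|p u| * |p v|) ≤ d * τ := by
    calc ∑ u, ∑ v, c u v * (|p u| * |p v|) ≤ d * ∑ u, p u ^ 2 :=
          ug_quadsum_le c d hc_nonneg hcrow hccol p
      _ ≤ d * τ := mul_le_mul_of_nonneg_left hp2 hd.le
  have hexp : d * (C * Real.sqrt ε + Real.sqrt τ) ^ 2
      = C ^ 2 * ε * d + 2 * (C * Real.sqrt ε * d * Real.sqrt τ) + d * τ := by
    rw [add_sq, mul_pow, Real.sq_sqrt hε, Real.sq_sqrt hτ]
    ring
  linarith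

lemma ug_final_arith (γ θ a B : ℝ) (hθ : 0 < θ) (hθγ : θ < γ) (hγ : γ ≤ 1) (ha0 : 0 < a)
    (hB0 : 0 ≤ B) (hta : θ / γ ≤ a ^ 2) (hkey : γ * B ^ 2 ≤ θ + 2 * a ^ 2) :
    B ≤ 2 * a / (γ - θ) := by
  have hγ0 : 0 < γ := hθ.trans hθγ
  have hγθ : 0 < γ - θ := by linarith
  have hθa : θ ≤ γ * a ^ 2 := by
    rw [div_le_iff₀ hγ0] at hta
    linarith
  have hbsq : B ^ 2 ≤ (2 * a / (γ - θ)) ^ 2 := by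
    have h1 : (γ - θ) ^ 2 ≤ γ ^ 2 := by nlinarith
    have h2 : B ^ 2 * (γ - θ) ^ 2 ≤ B ^ 2 * γ ^ 2 :=
      mul_le_mul_of_nonneg_left h1 (sq_nonneg _)
    have h4 : γ * (γ * B ^ 2) ≤ γ * (θ + 2 * a ^ 2) :=
      mul_le_mul_of_nonneg_left hkey hγ0.le
    have h5 : γ * (θ + 2 * a ^ 2) ≤ γ * (γ * a ^ 2 + 2 * a ^ 2) := by nlinarith
    have h6 : γ * (γ * a ^ 2 + 2 * a ^ 2) ≤ 3 * a ^ 2 := by nlinarith [sq_nonneg a]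
    have h7 : B ^ 2 * (γ - θ) ^ 2 ≤ 4 * a ^ 2 := by nlinarith [sq_nonneg a]
    rw [div_pow, le_div_iff₀ (by positivity)]
    nlinarith
  have h := Real.sqrt_le_sqrt hbsq
  rwa [Real.sqrt_sq hB0, Real.sqrt_sq (by positivity)] at h

end UGHelpers

set_option maxHeartbeats 1000000 in
/-- In the setting of Statement 12, if moreover `Y` is the span of
eigenvectors of `M̃` with eigenvalue at least `(1−γ)d` and `Y ≠ ℝ^{nk}`, then every
unit eigenvector `x` of `M` with eigenvalue at least `(1−θ)d` satisfies
`‖x − P_Y x‖ ≤ (2C√ε + 2√(θ/γ)) / (γ − θ)`. -/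
theorem eigenvector_close_to_perturbed_eigenspace
    {n k : ℕ} (hn : 0 < n)
    (w : Fin n → Fin n → ℝ) (d ε C θ γ : ℝ)
    (hd : 0 < d) (hε : 0 ≤ ε) (hθ : 0 < θ) (hθγ : θ < γ) (hγ : γ ≤ 1)
    (π π' : Fin n → Fin n → Equiv.Perm (Fin k))
    (hw_symm : ∀ u v, w u v = w v u)
    (hw_nonneg : ∀ u v, 0 ≤ w u v)
    (hw_le_one : ∀ u v, w u v ≤ 1)
    (hπ_symm : ∀ u v, π v u = (π u v)⁻¹)
    (hπ'_symm : ∀ u v, π' v u = (π' u v)⁻¹)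
    (hreg : ∀ u, ∑ v, w u v = d)
    (hdiff : (1 / 2) * ∑ u, ∑ v, (if π u v = π' u v then 0 else w u v)
        ≤ ε * n * d / 2)
    (A : Matrix (Fin n) (Fin n) ℝ) (hA : ∀ u v, A u v = w u v)
    (M : Matrix (Fin n × Fin k) (Fin n × Fin k) ℝ)
    (hM : ∀ p q, M p q = w p.1 q.1 * (if π p.1 q.1 p.2 = q.2 then 1 else 0))
    (Mt : Matrix (Fin n × Fin k) (Fin n × Fin k) ℝ)
    (hMt : ∀ p q, Mt p q = w p.1 q.1 * (if π' p.1 q.1 p.2 = q.2 then 1 else 0))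
    (S : Submodule ℝ (EuclideanSpace ℝ (Fin n)))
    (hS : S = Submodule.span ℝ {φ : EuclideanSpace ℝ (Fin n) |
        φ ≠ 0 ∧ ∃ μ : ℝ, (1 - γ) * d < μ ∧ A.mulVec φ = μ • φ})
    (hC : ∀ φ : EuclideanSpace ℝ (Fin n), φ ∈ S → ‖φ‖ = 1 →
        ∀ u, |φ u| ≤ C / Real.sqrt n)
    (Y : Submodule ℝ (EuclideanSpace ℝ (Fin n × Fin k)))
    (hY : Y = Submodule.span ℝ {v : EuclideanSpace ℝ (Fin n × Fin k) |
        v ≠ 0 ∧ ∃ ν : ℝ, (1 - γ) * d ≤ ν ∧ Mt.mulVec v = ν • v})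
    (hYne : Y ≠ ⊤)
    (x : EuclideanSpace ℝ (Fin n × Fin k)) (hx : ‖x‖ = 1)
    (lam : ℝ) (hlam : (1 - θ) * d ≤ lam)
    (hxeig : M.mulVec x = lam • x) :
    ‖x - (Y.orthogonalProjectionOnto x : EuclideanSpace ℝ (Fin n × Fin k))‖
      ≤ (2 * C * Real.sqrt ε + 2 * Real.sqrt (θ / γ)) / (γ - θ) := by
  classical
  have hγ0 : 0 < γ := hθ.trans hθγ
  have hγθ : 0 < γ - θ := by linarith
  have hn' : (0:ℝ) < n := by exact_mod_cast hn
  have hsqn : 0 < Real.sqrt n := Real.sqrt_pos.2 hn'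
  have htg0 : 0 ≤ θ / γ := by positivity
  -- linear maps
  set TA := Matrix.toEuclideanLin A with hTAdef
  set TM := Matrix.toEuclideanLin M with hTMdef
  set TMt := Matrix.toEuclideanLin Mt with hTMtdef
  -- entry symmetry
  have hAentry : ∀ u v, A v u = A u v := fun u v => by rw [hA, hA, hw_symm]
  have hMtentry : ∀ p q, Mt q p = Mt p q := by
    intro p q
    rw [hMt, hMt, hw_symm]
    congr 1
    have hcond : (π' q.1 p.1 q.2 = p.2) ↔ (π' p.1 q.1 p.2 = q.2) := by
      rw [hπ'_symm]
      constructor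
      · intro h
        have := congrArg (π' p.1 q.1) h
        simpa using this.symm
      · intro h
        rw [← h]
        simp
    simp only [hcond]
  have hTAsym : TA.IsSymmetric := ug_isSymmetric_of_entries A hAentry
  have hTMtsym : TMt.IsSymmetric := ug_isSymmetric_of_entries Mt hMtentry
  -- C ≥ 1
  have hC1 : 1 ≤ C := ug_C_ge_one hn w d C γ hd hγ0 hreg A hA S hS hC
  have hC0 : 0 ≤ C := le_trans zero_le_one hC1
  -- the quantity a
  obtain ⟨a, hadef⟩ : ∃ a : ℝ, a = C * Real.sqrt ε + Real.sqrt (θ / γ) := ⟨_, rfl⟩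
  have ha0 : 0 < a := by
    have h1 : 0 < Real.sqrt (θ / γ) := Real.sqrt_pos.2 (div_pos hθ hγ0)
    have h2 : 0 ≤ C * Real.sqrt ε := mul_nonneg hC0 (Real.sqrt_nonneg _)
    rw [hadef]
    linarith
  have hta : θ / γ ≤ a ^ 2 := by
    have h2 : 0 ≤ C * Real.sqrt ε := mul_nonneg hC0 (Real.sqrt_nonneg _)
    have h1 : Real.sqrt (θ / γ) ≤ a := by rw [hadef]; linarith
    calc θ / γ = Real.sqrt (θ / γ) ^ 2 := (Real.sq_sqrt htg0).symm
      _ ≤ a ^ 2 := by nlinarith [Real.sqrt_nonneg (θ / γ)]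
  -- decomposition of x
  set y : EuclideanSpace ℝ (Fin n × Fin k) :=
    (Y.orthogonalProjectionOnto x : EuclideanSpace ℝ (Fin n × Fin k)) with hydef
  set z : EuclideanSpace ℝ (Fin n × Fin k) := x - y with hzdef
  have hyY : y ∈ Y := SetLike.coe_mem _
  have hzY : z ∈ Yᗮ := Y.sub_starProjection_mem_orthogonal x
  have hxyz : x = y + z := by rw [hzdef]; abel
  have hyz : ⟪y, z⟫ = 0 := (Submodule.mem_orthogonal Y z).1 hzY y hyY
  have hyznorm : ‖y‖ ^ 2 + ‖z‖ ^ 2 = 1 := by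
    have h := norm_add_sq_real y z
    rw [← hxyz, hx, hyz] at h
    nlinarith
  -- the vector of block norms
  set φ : EuclideanSpace ℝ (Fin n) := WithLp.toLp 2 (fun u => Real.sqrt (∑ i, x (u, i) ^ 2)) with hφdef
  have hφapp : ∀ u, φ u = Real.sqrt (∑ i, x (u, i) ^ 2) := fun _ => rfl
  have hφnonneg : ∀ u, 0 ≤ φ u := fun u => Real.sqrt_nonneg _
  have hφsq : ∀ u, φ u ^ 2 = ∑ i, x (u, i) ^ 2 := fun u =>
    Real.sq_sqrt (Finset.sum_nonneg fun i _ => sq_nonneg _)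
  have hφnorm : ‖φ‖ ^ 2 = 1 := by
    rw [ug_eucl_norm_sq]
    calc ∑ u, φ u ^ 2 = ∑ u, ∑ i, x (u, i) ^ 2 := Finset.sum_congr rfl fun u _ => hφsq u
      _ = ∑ p : Fin n × Fin k, x p ^ 2 := by rw [Fintype.sum_prod_type]
      _ = ‖x‖ ^ 2 := (ug_eucl_norm_sq x).symm
      _ = 1 := by rw [hx]; norm_num
  -- block Cauchy-Schwarz
  have hblockCS : ∀ (u v : Fin n) (σ : Equiv.Perm (Fin k)),
      |∑ i, x (u, i) * x (v, σ i)| ≤ φ u * φ v := by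
    intro u v σ
    have h := Finset.sum_mul_sq_le_sq_mul_sq Finset.univ
      (fun i => x (u, i)) (fun i => x (v, σ i))
    calc |∑ i, x (u, i) * x (v, σ i)|
        = Real.sqrt ((∑ i, x (u, i) * x (v, σ i)) ^ 2) := (Real.sqrt_sq_eq_abs _).symm
      _ ≤ Real.sqrt ((∑ i, x (u, i) ^ 2) * ∑ i, x (v, σ i) ^ 2) := Real.sqrt_le_sqrt h
      _ = Real.sqrt (∑ i, x (u, i) ^ 2) * Real.sqrt (∑ i, x (v, σ i) ^ 2) :=
          Real.sqrt_mul (Finset.sum_nonneg fun i _ => sq_nonneg _) _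
      _ = φ u * φ v := by
          rw [hφapp, hφapp]
          congr 2
          exact Equiv.sum_comp σ (fun j => x (v, j) ^ 2)
  -- lam as inner product
  have hlamInner : lam = ⟪x, TM x⟫ := by
    have hMx : TM x = lam • x := (ug_eig_iff M x lam).2 hxeig
    rw [hMx, real_inner_smul_right, real_inner_self_eq_norm_sq, hx]
    norm_num
  -- expansions
  have hMexp : ⟪x, TM x⟫ = ∑ u, ∑ v, w u v * ∑ i, x (u, i) * x (v, π u v i) :=
    ug_block_expand w π M hM x
  have hMtexp : ⟪x, TMt x⟫ = ∑ u, ∑ v, w u v * ∑ i, x (u, i) * x (v, π' u v i) :=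
    ug_block_expand w π' Mt hMt x
  -- step: lam ≤ ⟨φ, A φ⟩
  have hφA : ⟪φ, TA φ⟫ = ∑ u, ∑ v, w u v * (φ u * φ v) := by
    rw [hTAdef, ug_inner_toEuclideanLin]
    exact Finset.sum_congr rfl fun u _ => Finset.sum_congr rfl fun v _ => by rw [hA]
  have hlam_le : lam ≤ ⟪φ, TA φ⟫ := by
    rw [hlamInner, hMexp, hφA]
    refine Finset.sum_le_sum fun u _ => Finset.sum_le_sum fun v _ => ?_
    exact mul_le_mul_of_nonneg_left
      (le_trans (le_abs_self _) (hblockCS u v (π u v))) (hw_nonneg u v)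
  -- S-decomposition of φ
  set s : EuclideanSpace ℝ (Fin n) :=
    (S.orthogonalProjectionOnto φ : EuclideanSpace ℝ (Fin n)) with hsdef
  set p : EuclideanSpace ℝ (Fin n) := φ - s with hpdef
  have hsS : s ∈ S := SetLike.coe_mem _
  have hpS : p ∈ Sᗮ := S.sub_starProjection_mem_orthogonal φ
  have hφsp : φ = s + p := by rw [hpdef]; abel
  have hsp : ⟪s, p⟫ = 0 := (Submodule.mem_orthogonal S p).1 hpS s hsS
  have hspnorm : ‖s‖ ^ 2 + ‖p‖ ^ 2 = 1 := by
    have h := norm_add_sq_real s p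
    rw [← hφsp, hφnorm, hsp] at h
    nlinarith
  -- invariance of S under TA
  have hTSinv : ∀ v ∈ S, TA v ∈ S := by
    intro v hv
    have hle : S ≤ Submodule.comap TA S := by
      rw [hS, Submodule.span_le]
      rintro v' ⟨hv0, μ, hμ, hv'⟩
      simp only [Submodule.mem_comap, SetLike.mem_coe]
      have hTv : TA v' = μ • v' := (ug_eig_iff A v' μ).2 hv'
      rw [hTv]
      exact Submodule.smul_mem _ _ (Submodule.subset_span ⟨hv0, μ, hμ, hv'⟩)
    have h2 := hle hv
    simpa using h2
  -- quadratic form bounds for A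
  have hsA : ⟪s, TA s⟫ ≤ d * ‖s‖ ^ 2 := by
    rw [hTAdef, ug_inner_toEuclideanLin]
    calc ∑ u, ∑ v, A u v * (s u * s v)
        ≤ ∑ u, ∑ v, A u v * (|s u| * |s v|) := by
          refine Finset.sum_le_sum fun u _ => Finset.sum_le_sum fun v _ => ?_
          refine mul_le_mul_of_nonneg_left ?_ (by rw [hA]; exact hw_nonneg u v)
          calc s u * s v ≤ |s u * s v| := le_abs_self _
            _ = |s u| * |s v| := abs_mul _ _
      _ ≤ d * ∑ u, s u ^ 2 := by
          refine ug_quadsum_le _ d (fun u v => by rw [hA]; exact hw_nonneg u v)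
            (fun u => ?_) (fun v => ?_) s
          · simp_rw [hA]; exact (hreg u).le
          · simp_rw [hA]
            have h2 : ∑ u, w u v = d := by
              rw [Finset.sum_congr rfl fun u _ => hw_symm u v]
              exact hreg v
            exact h2.le
      _ = d * ‖s‖ ^ 2 := by rw [ug_eucl_norm_sq]
  have hpA : ⟪p, TA p⟫ ≤ (1 - γ) * d * ‖p‖ ^ 2 := by
    have h := ug_quad_form_le_on_orthogonal TA hTAsym (fun μ => (1 - γ) * d < μ)
      ((1 - γ) * d) (fun μ h => not_lt.1 h) S (by rw [hS, hTAdef]; simp only [ug_eig_iff]) p hpS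
    linarith
  have hφA_le : ⟪φ, TA φ⟫ ≤ d * ‖s‖ ^ 2 + (1 - γ) * d * ‖p‖ ^ 2 := by
    have hcross1 : ⟪s, TA p⟫ = 0 := by
      rw [← hTAsym s p]
      exact ((Submodule.mem_orthogonal S p).1 hpS _ (hTSinv s hsS))
    have hcross2 : ⟪p, TA s⟫ = 0 := by
      rw [real_inner_comm]
      exact ((Submodule.mem_orthogonal S p).1 hpS _ (hTSinv s hsS))
    have hexp : ⟪φ, TA φ⟫ = ⟪s, TA s⟫ + ⟪s, TA p⟫ + ⟪p, TA s⟫ + ⟪p, TA p⟫ := by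
      rw [hφsp, map_add, inner_add_left, inner_add_right, inner_add_right]
      ring
    rw [hexp, hcross1, hcross2]
    linarith
  have hp2 : ‖p‖ ^ 2 ≤ θ / γ := by
    have h1 : (1 - θ) * d ≤ d * ‖s‖ ^ 2 + (1 - γ) * d * ‖p‖ ^ 2 :=
      le_trans hlam (le_trans hlam_le hφA_le)
    have h2 : γ * ‖p‖ ^ 2 ≤ θ := by
      have hds : d * ‖s‖ ^ 2 = d * (1 - ‖p‖ ^ 2) := by rw [← hspnorm]; ring
      rw [hds] at h1
      nlinarith
    rw [le_div_iff₀ hγ0]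
    linarith
  -- the ℓ∞ bound on s
  have hsinf : ∀ u, |s u| ≤ C / Real.sqrt n := by
    intro u
    by_cases hs0 : s = 0
    · rw [hs0]
      show |(0 : EuclideanSpace ℝ (Fin n)) u| ≤ _
      rw [show (0 : EuclideanSpace ℝ (Fin n)) u = 0 from rfl, abs_zero]
      exact div_nonneg hC0 hsqn.le
    · have hsn : 0 < ‖s‖ := norm_pos_iff.2 hs0
      have hsle : ‖s‖ ≤ 1 := by nlinarith [sq_nonneg ‖p‖, hsn]
      have hunit : ‖(‖s‖⁻¹ • s : EuclideanSpace ℝ (Fin n))‖ = 1 := by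
        rw [norm_smul, norm_inv, norm_norm, inv_mul_cancel₀ hsn.ne']
      have hmem : (‖s‖⁻¹ • s : EuclideanSpace ℝ (Fin n)) ∈ S := Submodule.smul_mem _ _ hsS
      have h1 := hC _ hmem hunit u
      rw [PiLp.smul_apply, smul_eq_mul, abs_mul, abs_of_nonneg (inv_nonneg.2 hsn.le)] at h1
      have h2 := mul_le_mul_of_nonneg_left h1 hsn.le
      rw [← mul_assoc, mul_inv_cancel₀ hsn.ne', one_mul] at h2
      calc |s u| ≤ ‖s‖ * (C / Real.sqrt n) := h2
        _ ≤ 1 * (C / Real.sqrt n) := by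
            exact mul_le_mul_of_nonneg_right hsle (div_nonneg hC0 hsqn.le)
        _ = C / Real.sqrt n := one_mul _
  -- difference weights
  set c : Fin n → Fin n → ℝ := fun u v => if π u v = π' u v then 0 else w u v with hcdef
  have hcapp : ∀ u v, c u v = if π u v = π' u v then 0 else w u v := fun _ _ => rfl
  have hc_nonneg : ∀ u v, 0 ≤ c u v := by
    intro u v; rw [hcapp]; split
    · exact le_refl 0
    · exact hw_nonneg u v
  have hc_le : ∀ u v, c u v ≤ w u v := by
    intro u v; rw [hcapp]; split
    · exact hw_nonneg u v
    · exact le_refl _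
  have hc_symm : ∀ u v, c v u = c u v := by
    intro u v
    rw [hcapp, hcapp]
    have hcond : (π v u = π' v u) ↔ (π u v = π' u v) := by
      rw [hπ_symm, hπ'_symm, _root_.inv_inj]
    simp only [hcond, hw_symm v u]
  have hcsum : ∑ u, ∑ v, c u v ≤ ε * n * d := by
    have he : ∑ u, ∑ v, c u v = ∑ u, ∑ v, (if π u v = π' u v then 0 else w u v) := rfl
    rw [he]
    linarith
  have hcrow : ∀ u, ∑ v, c u v ≤ d := by
    intro u
    calc ∑ v, c u v ≤ ∑ v, w u v := Finset.sum_le_sum fun v _ => hc_le u v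
      _ = d := hreg u
  have hccol : ∀ v, ∑ u, c u v ≤ d := by
    intro v
    calc ∑ u, c u v = ∑ u, c v u := Finset.sum_congr rfl fun u _ => (hc_symm u v).symm
      _ ≤ d := hcrow v
  -- Ediff bound
  obtain ⟨Tsum, hTsumdef⟩ : ∃ T : ℝ, T = ∑ u, ∑ v, c u v * (φ u * φ v) := ⟨_, rfl⟩
  have hEdiff : ⟪x, TM x⟫ - ⟪x, TMt x⟫ ≤ 2 * Tsum := by
    rw [hMexp, hMtexp, hTsumdef, ← Finset.sum_sub_distrib, Finset.mul_sum]
    refine Finset.sum_le_sum fun u _ => ?_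
    rw [← Finset.sum_sub_distrib, Finset.mul_sum]
    refine Finset.sum_le_sum fun v _ => ?_
    by_cases hpq : π u v = π' u v
    · rw [hpq]
      have hc0 : c u v = 0 := by rw [hcapp, if_pos hpq]
      rw [hc0]
      simp
    · have hcw : c u v = w u v := by rw [hcapp, if_neg hpq]
      have h1 := hblockCS u v (π u v)
      have h2 := hblockCS u v (π' u v)
      rw [abs_le] at h1 h2
      rw [hcw]
      have hsub : (∑ i, x (u, i) * x (v, π u v i)) - (∑ i, x (u, i) * x (v, π' u v i))
          ≤ 2 * (φ u * φ v) := by linarith [h1.2, h2.1]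
      have h3 := mul_le_mul_of_nonneg_left hsub (hw_nonneg u v)
      linarith [h3]
  -- Tsum ≤ d * a^2
  have hTbound : Tsum ≤ d * a ^ 2 := by
    rw [hTsumdef, hadef]
    refine ug_T_bound hn c d ε C (θ / γ) hd hε htg0 hC0 hc_nonneg hcrow hccol hcsum
      s p φ hsinf ?_ ?_ hφnonneg
    · rw [← ug_eucl_norm_sq]
      exact hp2
    · intro u
      rw [hφsp]
      rfl
  -- Mt quadratic form bound
  have hMtbound : ⟪x, TMt x⟫ ≤ d * ‖y‖ ^ 2 + (1 - γ) * d * ‖z‖ ^ 2 := by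
    have hTYinv : ∀ v ∈ Y, TMt v ∈ Y := by
      intro v hv
      have hle : Y ≤ Submodule.comap TMt Y := by
        rw [hY, Submodule.span_le]
        rintro v' ⟨hv0, μ, hμ, hv'⟩
        simp only [Submodule.mem_comap, SetLike.mem_coe]
        have hTv : TMt v' = μ • v' := (ug_eig_iff Mt v' μ).2 hv'
        rw [hTv]
        exact Submodule.smul_mem _ _ (Submodule.subset_span ⟨hv0, μ, hμ, hv'⟩)
      have h2 := hle hv
      simpa using h2
    have hyMt : ⟪y, TMt y⟫ ≤ d * ‖y‖ ^ 2 := by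
      rw [hTMtdef, ug_inner_toEuclideanLin]
      calc ∑ p', ∑ q, Mt p' q * (y p' * y q)
          ≤ ∑ p', ∑ q, Mt p' q * (|y p'| * |y q|) := by
            refine Finset.sum_le_sum fun p' _ => Finset.sum_le_sum fun q _ => ?_
            refine mul_le_mul_of_nonneg_left ?_ ?_
            · calc y p' * y q ≤ |y p' * y q| := le_abs_self _
                _ = |y p'| * |y q| := abs_mul _ _
            · rw [hMt]
              have := hw_nonneg p'.1 q.1
              positivity
        _ ≤ d * ∑ p', y p' ^ 2 := by
            refine ug_quadsum_le _ d (fun p' q => ?_) (fun p' => ?_) (fun q => ?_) y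
            · rw [hMt]
              have := hw_nonneg p'.1 q.1
              positivity
            · rw [ug_block_rowsum w π' Mt hMt p']
              exact (hreg p'.1).le
            · have he : ∑ p', Mt p' q = d := by
                calc ∑ p', Mt p' q = ∑ p', Mt q p' :=
                      Finset.sum_congr rfl fun p' _ => hMtentry q p'
                  _ = ∑ v, w q.1 v := ug_block_rowsum w π' Mt hMt q
                  _ = d := hreg q.1
              exact he.le
        _ = d * ‖y‖ ^ 2 := by rw [ug_eucl_norm_sq]
    have hzMt : ⟪z, TMt z⟫ ≤ (1 - γ) * d * ‖z‖ ^ 2 := by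
      have h := ug_quad_form_le_on_orthogonal TMt hTMtsym (fun ν => (1 - γ) * d ≤ ν)
        ((1 - γ) * d) (fun μ h => (not_le.1 h).le) Y (by rw [hY, hTMtdef]; simp only [ug_eig_iff]) z hzY
      linarith
    have hcross1 : ⟪y, TMt z⟫ = 0 := by
      rw [← hTMtsym y z]
      exact ((Submodule.mem_orthogonal Y z).1 hzY _ (hTYinv y hyY))
    have hcross2 : ⟪z, TMt y⟫ = 0 := by
      rw [real_inner_comm]
      exact ((Submodule.mem_orthogonal Y z).1 hzY _ (hTYinv y hyY))
    have hexp : ⟪x, TMt x⟫ = ⟪y, TMt y⟫ + ⟪y, TMt z⟫ + ⟪z, TMt y⟫ + ⟪z, TMt z⟫ := by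
      rw [hxyz, map_add, inner_add_left, inner_add_right, inner_add_right]
      ring
    rw [hexp, hcross1, hcross2]
    linarith
  -- assemble
  have hfinal : γ * ‖z‖ ^ 2 ≤ θ + 2 * a ^ 2 := by
    have h0 : (1 - θ) * d ≤ ⟪x, TM x⟫ := hlamInner ▸ hlam
    have h1 : (1 - θ) * d ≤ d * ‖y‖ ^ 2 + (1 - γ) * d * ‖z‖ ^ 2 + 2 * (d * a ^ 2) := by
      linarith [hEdiff, hMtbound, hTbound]
    have hdy : d * ‖y‖ ^ 2 = d * (1 - ‖z‖ ^ 2) := by rw [← hyznorm]; ring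
    rw [hdy] at h1
    have h2 : d * (γ * ‖z‖ ^ 2) ≤ d * (θ + 2 * a ^ 2) := by linarith [h1]
    exact le_of_mul_le_mul_left h2 hd
  have hzle : ‖z‖ ≤ 2 * a / (γ - θ) :=
    ug_final_arith γ θ a ‖z‖ hθ hθγ hγ ha0 (norm_nonneg z) hta hfinal
  have hnum : 2 * C * Real.sqrt ε + 2 * Real.sqrt (θ / γ) = 2 * a := by rw [hadef]; ring
  rw [hnum]
  exact hzle
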